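/- Let v be even, and suppose B^{(1)}, ..., B^{(k)} are k pairwise disjoint Steiner quadruple systems on Z_v, F and F' are one-factorizations of K_v, and L is a k × (v-1) Latin rectangle over {0,...,v-2} whose rows define permutations α_1,...,α_k. Applying the DB Construction with B^{(m)} and α_m for each m yields k pairwise disjoint Steiner quadruple systems of order 2v on Z_v × Z_2. -/
import Mathlib


/-- A Steiner quadruple system on the point set `α`. -/
def IsSQS {α : Type} (B : Set (Finset α)) : Prop :=
  (∀ b ∈ B, b.card = 4) ∧ ∀ t : Finset α, t.card = 3 → ∃! b, b ∈ B ∧ t ⊆ b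

/-- A one-factorization of `K_v` on the vertex set `Z_v`: `v - 1` perfect matchings
partitioning all 2-subsets. -/
def IsOneFactorization (v : ℕ) (F : Fin (v - 1) → Set (Finset (ZMod v))) : Prop :=
  (∀ i, (∀ p ∈ F i, p.card = 2) ∧ ((F i).Pairwise fun p q => Disjoint p q) ∧
    ∀ x : ZMod v, ∃ p ∈ F i, x ∈ p) ∧
  ∀ p : Finset (ZMod v), p.card = 2 → ∃! i, p ∈ F i

/-- The blocks of the DB (doubling) Construction on `Z_v × Z_2`. -/
def dbBlocks (v : ℕ) (B : Set (Finset (ZMod v)))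
    (F F' : Fin (v - 1) → Set (Finset (ZMod v))) (α : Equiv.Perm (Fin (v - 1))) :
    Set (Finset (ZMod v × ZMod 2)) :=
  { q | (∃ b ∈ B, q = b.image fun x => (x, (0 : ZMod 2))) ∨
        (∃ b ∈ B, q = b.image fun x => (x, (1 : ZMod 2))) ∨
        (∃ i, ∃ p ∈ F i, ∃ p' ∈ F' (α i),
          q = (p.image fun x => (x, (0 : ZMod 2))) ∪ (p'.image fun x => (x, (1 : ZMod 2)))) }

namespace DBAux

variable {v : ℕ}

/-- The level-`j` slice of a set of points in `Z_v × Z_2`. -/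
def sl (j : ZMod 2) (q : Finset (ZMod v × ZMod 2)) : Finset (ZMod v) :=
  (q.filter fun x => x.2 = j).image Prod.fst

lemma mem_sl {j : ZMod 2} {q : Finset (ZMod v × ZMod 2)} {x : ZMod v} :
    x ∈ sl j q ↔ (x, j) ∈ q := by
  simp only [sl, Finset.mem_image, Finset.mem_filter]
  constructor
  · rintro ⟨⟨a, b⟩, ⟨hq, hb⟩, rfl⟩; cases hb; exact hq
  · intro h; exact ⟨(x, j), ⟨h, rfl⟩, rfl⟩

lemma zmod2_cases (j : ZMod 2) : j = 0 ∨ j = 1 := by revert j; decide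

lemma sl_image_same (j : ZMod 2) (s : Finset (ZMod v)) :
    sl j (s.image fun x => (x, j)) = s := by
  ext x; simp [mem_sl]

lemma sl_image_ne {j j' : ZMod 2} (h : j' ≠ j) (s : Finset (ZMod v)) :
    sl j (s.image fun x => (x, j')) = ∅ := by
  ext x; simp [mem_sl, h]

lemma sl_union (j : ZMod 2) (q r : Finset (ZMod v × ZMod 2)) :
    sl j (q ∪ r) = sl j q ∪ sl j r := by
  ext x; simp [mem_sl]

lemma sl_ext {q r : Finset (ZMod v × ZMod 2)} (h0 : sl 0 q = sl 0 r)
    (h1 : sl 1 q = sl 1 r) : q = r := by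
  ext ⟨x, j⟩
  rcases zmod2_cases j with rfl | rfl
  · rw [← mem_sl, ← mem_sl, h0]
  · rw [← mem_sl, ← mem_sl, h1]

lemma sl_subset {t q : Finset (ZMod v × ZMod 2)} :
    t ⊆ q ↔ sl 0 t ⊆ sl 0 q ∧ sl 1 t ⊆ sl 1 q := by
  constructor
  · intro h
    constructor <;> intro x hx <;> rw [mem_sl] at * <;> exact h hx
  · rintro ⟨h0, h1⟩ ⟨x, j⟩ hx
    rcases zmod2_cases j with rfl | rfl
    · rw [← mem_sl] at hx ⊢; exact h0 hx
    · rw [← mem_sl] at hx ⊢; exact h1 hx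

lemma sl_cross_0 (p p' : Finset (ZMod v)) :
    sl 0 ((p.image fun x => (x, (0:ZMod 2))) ∪ (p'.image fun x => (x, (1:ZMod 2)))) = p := by
  rw [sl_union, sl_image_same, sl_image_ne (by decide), Finset.union_empty]

lemma sl_cross_1 (p p' : Finset (ZMod v)) :
    sl 1 ((p.image fun x => (x, (0:ZMod 2))) ∪ (p'.image fun x => (x, (1:ZMod 2)))) = p' := by
  rw [sl_union, sl_image_ne (by decide), sl_image_same, Finset.empty_union]

lemma card_eq_slices (q : Finset (ZMod v × ZMod 2)) :
    q.card = (sl 0 q).card + (sl 1 q).card := by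
  have hinj : ∀ j : ZMod 2, Function.Injective (fun x : ZMod v => (x, j)) := by
    intro j a b hab; exact (Prod.mk.injEq _ _ _ _ ▸ congrArg id hab).1
  have hq : q = ((sl 0 q).image fun x => (x, (0:ZMod 2))) ∪
      ((sl 1 q).image fun x => (x, (1:ZMod 2))) := by
    apply sl_ext
    · rw [sl_cross_0]
    · rw [sl_cross_1]
  have hdisj : Disjoint ((sl 0 q).image fun x => (x, (0:ZMod 2)))
      ((sl 1 q).image fun x => (x, (1:ZMod 2))) := by
    rw [Finset.disjoint_left]
    rintro ⟨x, j⟩ h1 h2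
    simp only [Finset.mem_image] at h1 h2
    obtain ⟨a, _, ha⟩ := h1
    obtain ⟨b, _, hb⟩ := h2
    cases ha
    exact one_ne_zero (congrArg Prod.snd hb)
  conv_lhs => rw [hq]
  rw [Finset.card_union_of_disjoint hdisj,
    Finset.card_image_of_injective _ (hinj 0), Finset.card_image_of_injective _ (hinj 1)]

lemma mem_dbBlocks_iff {B : Set (Finset (ZMod v))}
    {F F' : Fin (v - 1) → Set (Finset (ZMod v))} {α : Equiv.Perm (Fin (v - 1))}
    {q : Finset (ZMod v × ZMod 2)} :
    q ∈ dbBlocks v B F F' α ↔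
      (∃ b ∈ B, sl 0 q = b ∧ sl 1 q = ∅) ∨
      (∃ b ∈ B, sl 0 q = ∅ ∧ sl 1 q = b) ∨
      (∃ i, ∃ p ∈ F i, ∃ p' ∈ F' (α i), sl 0 q = p ∧ sl 1 q = p') := by
  constructor
  · rintro (⟨b, hb, rfl⟩ | ⟨b, hb, rfl⟩ | ⟨i, p, hp, p', hp', rfl⟩)
    · exact Or.inl ⟨b, hb, sl_image_same 0 b, sl_image_ne (by decide) b⟩
    · exact Or.inr (Or.inl ⟨b, hb, sl_image_ne (by decide) b, sl_image_same 1 b⟩)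
    · exact Or.inr (Or.inr ⟨i, p, hp, p', hp', sl_cross_0 p p', sl_cross_1 p p'⟩)
  · rintro (⟨b, hb, h0, h1⟩ | ⟨b, hb, h0, h1⟩ | ⟨i, p, hp, p', hp', h0, h1⟩)
    · refine Or.inl ⟨b, hb, sl_ext ?_ ?_⟩
      · rw [h0, sl_image_same]
      · rw [h1, sl_image_ne (by decide)]
    · refine Or.inr (Or.inl ⟨b, hb, sl_ext ?_ ?_⟩)
      · rw [h0, sl_image_ne (by decide)]
      · rw [h1, sl_image_same]
    · refine Or.inr (Or.inr ⟨i, p, hp, p', hp', sl_ext ?_ ?_⟩)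
      · rw [h0, sl_cross_0]
      · rw [h1, sl_cross_1]

lemma matching_unique {S : Set (Finset (ZMod v))}
    (hpair : S.Pairwise fun p q => Disjoint p q) {p q : Finset (ZMod v)} {y : ZMod v}
    (hp : p ∈ S) (hq : q ∈ S) (hyp : y ∈ p) (hyq : y ∈ q) : p = q := by
  by_contra hne
  exact Finset.disjoint_left.mp (hpair hp hq hne) hyp hyq

end DBAux

open DBAux in
/-- Applying the DB Construction to `k` pairwise disjoint SQS(v)s with the
permutations given by the rows of a `k × (v-1)` Latin rectangle yields `k` pairwise
disjoint Steiner quadruple systems of order `2v` on `Z_v × Z_2`. -/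
theorem db_construction_pdq (v k : ℕ) (hv : Even v)
    (B : Fin k → Set (Finset (ZMod v)))
    (hB : ∀ m, IsSQS (B m))
    (hBdisj : ∀ m m', m ≠ m' → Disjoint (B m) (B m'))
    (F F' : Fin (v - 1) → Set (Finset (ZMod v)))
    (hF : IsOneFactorization v F) (hF' : IsOneFactorization v F')
    (α : Fin k → Equiv.Perm (Fin (v - 1)))
    (hlatin : ∀ m m', m ≠ m' → ∀ i, α m i ≠ α m' i) :
    (∀ m, IsSQS (dbBlocks v (B m) F F' (α m))) ∧
    (∀ m m', m ≠ m' →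
      Disjoint (dbBlocks v (B m) F F' (α m)) (dbBlocks v (B m') F F' (α m'))) := by
  classical
  constructor
  · intro m
    constructor
    · -- all blocks have cardinality 4
      intro q hq
      rw [mem_dbBlocks_iff] at hq
      rw [card_eq_slices]
      rcases hq with ⟨b, hb, h0, h1⟩ | ⟨b, hb, h0, h1⟩ | ⟨i, p, hp, p', hp', h0, h1⟩
      · rw [h0, h1, (hB m).1 b hb, Finset.card_empty]
      · rw [h0, h1, (hB m).1 b hb, Finset.card_empty]
      · rw [h0, h1, (hF.1 i).1 p hp, (hF'.1 (α m i)).1 p' hp']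
    · -- every triple in a unique block
      intro t ht
      have hsum : (sl 0 t).card + (sl 1 t).card = 3 := by
        rw [← card_eq_slices, ht]
      have hcases : (sl 0 t).card = 3 ∨ (sl 0 t).card = 2 ∨
          (sl 0 t).card = 1 ∨ (sl 0 t).card = 0 := by omega
      rcases hcases with h3 | h2 | h1c | h0c
      · -- all three points at level 0
        obtain ⟨bb, ⟨hbbB, hbbsub⟩, hbbuniq⟩ := (hB m).2 (sl 0 t) h3
        have h1t : sl 1 t = ∅ := Finset.card_eq_zero.mp (by omega)
        refine ⟨bb.image (fun x => (x, (0:ZMod 2))), ⟨Or.inl ⟨bb, hbbB, rfl⟩, ?_⟩, ?_⟩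
        · rw [sl_subset]
          refine ⟨?_, ?_⟩
          · rw [sl_image_same]; exact hbbsub
          · rw [h1t]; exact Finset.empty_subset _
        · rintro q ⟨hqmem, hqsub⟩
          rw [mem_dbBlocks_iff] at hqmem
          rw [sl_subset] at hqsub
          rcases hqmem with ⟨b, hb, h0, h1⟩ | ⟨b, hb, h0, h1⟩ | ⟨i, p, hp, p', hp', h0, h1⟩
          · have hbeq : b = bb := hbbuniq b ⟨hb, by rw [← h0]; exact hqsub.1⟩
            subst hbeq
            apply sl_ext
            · rw [h0, sl_image_same]
            · rw [h1, sl_image_ne (by decide)]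
          · exfalso
            have hle : sl 0 t ⊆ (∅ : Finset (ZMod v)) := by rw [← h0]; exact hqsub.1
            have := Finset.card_le_card hle
            rw [Finset.card_empty] at this; omega
          · exfalso
            have hle : sl 0 t ⊆ p := by rw [← h0]; exact hqsub.1
            have := Finset.card_le_card hle
            rw [(hF.1 i).1 p hp] at this; omega
      · -- two points at level 0, one at level 1
        have h1c : (sl 1 t).card = 1 := by omega
        obtain ⟨y, hy⟩ := Finset.card_eq_one.mp h1c
        obtain ⟨i, hpFi, hiuniq⟩ := hF.2 (sl 0 t) h2
        obtain ⟨p', hp'F, hyp'⟩ := (hF'.1 (α m i)).2.2 y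
        refine ⟨((sl 0 t).image fun x => (x, (0:ZMod 2))) ∪
            (p'.image fun x => (x, (1:ZMod 2))),
          ⟨Or.inr (Or.inr ⟨i, sl 0 t, hpFi, p', hp'F, rfl⟩), ?_⟩, ?_⟩
        · rw [sl_subset, sl_cross_0, sl_cross_1]
          exact ⟨subset_rfl, by rw [hy]; exact Finset.singleton_subset_iff.mpr hyp'⟩
        · rintro q ⟨hqmem, hqsub⟩
          rw [mem_dbBlocks_iff] at hqmem
          rw [sl_subset] at hqsub
          rcases hqmem with ⟨b, hb, h0, h1⟩ | ⟨b, hb, h0, h1⟩ | ⟨i2, r, hr, r', hr', h0, h1⟩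
          · exfalso
            have hle : sl 1 t ⊆ (∅ : Finset (ZMod v)) := by rw [← h1]; exact hqsub.2
            have := Finset.card_le_card hle
            rw [Finset.card_empty] at this; omega
          · exfalso
            have hle : sl 0 t ⊆ (∅ : Finset (ZMod v)) := by rw [← h0]; exact hqsub.1
            have := Finset.card_le_card hle
            rw [Finset.card_empty] at this; omega
          · have hreq : sl 0 t = r := by
              refine Finset.eq_of_subset_of_card_le (by rw [← h0]; exact hqsub.1) ?_
              rw [(hF.1 i2).1 r hr, h2]
            have hieq : i2 = i := hiuniq i2 (by rw [hreq]; exact hr)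
            subst hieq
            have hyr' : y ∈ r' := by
              have : y ∈ sl 1 q := hqsub.2 (by rw [hy]; exact Finset.mem_singleton_self y)
              rw [h1] at this; exact this
            have hr'eq : r' = p' :=
              matching_unique (hF'.1 (α m i2)).2.1 hr' hp'F hyr' hyp'
            apply sl_ext
            · rw [h0, sl_cross_0, hreq]
            · rw [h1, sl_cross_1, hr'eq]
      · -- one point at level 0, two at level 1
        have h2 : (sl 1 t).card = 2 := by omega
        obtain ⟨x, hx⟩ := Finset.card_eq_one.mp h1c
        obtain ⟨j, hpF'j, hjuniq⟩ := hF'.2 (sl 1 t) h2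
        set i := (α m).symm j with hi
        have hai : α m i = j := Equiv.apply_symm_apply _ _
        obtain ⟨p, hpF, hxp⟩ := (hF.1 i).2.2 x
        refine ⟨(p.image fun x => (x, (0:ZMod 2))) ∪
            ((sl 1 t).image fun x => (x, (1:ZMod 2))),
          ⟨Or.inr (Or.inr ⟨i, p, hpF, sl 1 t, by rw [hai]; exact hpF'j, rfl⟩), ?_⟩, ?_⟩
        · rw [sl_subset, sl_cross_0, sl_cross_1]
          exact ⟨by rw [hx]; exact Finset.singleton_subset_iff.mpr hxp, subset_rfl⟩
        · rintro q ⟨hqmem, hqsub⟩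
          rw [mem_dbBlocks_iff] at hqmem
          rw [sl_subset] at hqsub
          rcases hqmem with ⟨b, hb, h0, h1⟩ | ⟨b, hb, h0, h1⟩ | ⟨i2, r, hr, r', hr', h0, h1⟩
          · exfalso
            have hle : sl 1 t ⊆ (∅ : Finset (ZMod v)) := by rw [← h1]; exact hqsub.2
            have := Finset.card_le_card hle
            rw [Finset.card_empty] at this; omega
          · exfalso
            have hle : sl 0 t ⊆ (∅ : Finset (ZMod v)) := by rw [← h0]; exact hqsub.1
            have := Finset.card_le_card hle
            rw [Finset.card_empty] at this; omega
          · have hr'eq : sl 1 t = r' := by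
              refine Finset.eq_of_subset_of_card_le (by rw [← h1]; exact hqsub.2) ?_
              rw [(hF'.1 (α m i2)).1 r' hr', h2]
            have hjeq : α m i2 = j := hjuniq (α m i2) (by rw [hr'eq]; exact hr')
            have hieq : i2 = i := by
              rw [hi, ← hjeq, Equiv.symm_apply_apply]
            subst hieq
            have hxr : x ∈ r := by
              have : x ∈ sl 0 q := hqsub.1 (by rw [hx]; exact Finset.mem_singleton_self x)
              rw [h0] at this; exact this
            have hreq : r = p := matching_unique (hF.1 i).2.1 hr hpF hxr hxp
            apply sl_ext
            · rw [h0, sl_cross_0, hreq]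
            · rw [h1, sl_cross_1, hr'eq]
      · -- all three points at level 1
        have h3 : (sl 1 t).card = 3 := by omega
        obtain ⟨bb, ⟨hbbB, hbbsub⟩, hbbuniq⟩ := (hB m).2 (sl 1 t) h3
        have h0t : sl 0 t = ∅ := Finset.card_eq_zero.mp h0c
        refine ⟨bb.image (fun x => (x, (1:ZMod 2))), ⟨Or.inr (Or.inl ⟨bb, hbbB, rfl⟩), ?_⟩, ?_⟩
        · rw [sl_subset]
          refine ⟨?_, ?_⟩
          · rw [h0t]; exact Finset.empty_subset _
          · rw [sl_image_same]; exact hbbsub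
        · rintro q ⟨hqmem, hqsub⟩
          rw [mem_dbBlocks_iff] at hqmem
          rw [sl_subset] at hqsub
          rcases hqmem with ⟨b, hb, h0, h1⟩ | ⟨b, hb, h0, h1⟩ | ⟨i, p, hp, p', hp', h0, h1⟩
          · exfalso
            have hle : sl 1 t ⊆ (∅ : Finset (ZMod v)) := by rw [← h1]; exact hqsub.2
            have := Finset.card_le_card hle
            rw [Finset.card_empty] at this; omega
          · have hbeq : b = bb := hbbuniq b ⟨hb, by rw [← h1]; exact hqsub.2⟩
            subst hbeq
            apply sl_ext
            · rw [h0, sl_image_ne (by decide)]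
            · rw [h1, sl_image_same]
          · exfalso
            have hle : sl 1 t ⊆ p' := by rw [← h1]; exact hqsub.2
            have := Finset.card_le_card hle
            rw [(hF'.1 (α m i)).1 p' hp'] at this; omega
  · -- pairwise disjointness
    intro m m' hmm
    rw [Set.disjoint_left]
    intro q hq hq'
    rw [mem_dbBlocks_iff] at hq hq'
    rcases hq with ⟨b, hb, h0, h1⟩ | ⟨b, hb, h0, h1⟩ | ⟨i, p, hp, p', hp', h0, h1⟩ <;>
      rcases hq' with ⟨b2, hb2, g0, g1⟩ | ⟨b2, hb2, g0, g1⟩ | ⟨i2, r, hr, r', hr', g0, g1⟩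
    · have : b = b2 := by rw [← h0, g0]
      subst this
      exact Set.disjoint_left.mp (hBdisj m m' hmm) hb hb2
    · have hbe : b = ∅ := by rw [← h0, g0]
      have := (hB m).1 b hb
      rw [hbe, Finset.card_empty] at this; omega
    · have hre : r' = ∅ := by rw [← g1, h1]
      have := (hF'.1 (α m' i2)).1 r' hr'
      rw [hre, Finset.card_empty] at this; omega
    · have hbe : b = ∅ := by rw [← h1, g1]
      have := (hB m).1 b hb
      rw [hbe, Finset.card_empty] at this; omega
    · have : b = b2 := by rw [← h1, g1]
      subst this
      exact Set.disjoint_left.mp (hBdisj m m' hmm) hb hb2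
    · have hre : r = ∅ := by rw [← g0, h0]
      have := (hF.1 i2).1 r hr
      rw [hre, Finset.card_empty] at this; omega
    · have hpe : p' = ∅ := by rw [← h1, g1]
      have := (hF'.1 (α m i)).1 p' hp'
      rw [hpe, Finset.card_empty] at this; omega
    · have hpe : p = ∅ := by rw [← h0, g0]
      have := (hF.1 i).1 p hp
      rw [hpe, Finset.card_empty] at this; omega
    · have hpr : p = r := by rw [← h0, g0]
      subst hpr
      have hieq : i = i2 :=
        ExistsUnique.unique (hF.2 p ((hF.1 i).1 p hp)) hp hr
      subst hieq
      have hpr' : p' = r' := by rw [← h1, g1]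
      subst hpr'
      have haeq : α m i = α m' i :=
        ExistsUnique.unique (hF'.2 p' ((hF'.1 (α m i)).1 p' hp')) hp' hr'
      exact hlatin m m' hmm i haeq
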